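/- The map ψ sending a matrix A = [[a,b],[c,d]] in Γ₀(n)₊ (a subgroup of SL(2,ℝ) normalizing Γ₀(n)) to the 3×3 matrix [[d², -c²/n, 2cd],[-nb², a², -2nab],[bd, -ac/n, ad+bc]] satisfies ᵗψ(A)·Σ·ψ(A) = Σ, where Σ = [[0,1,0],[1,0,0],[0,0,2n]]. That is, ψ(A) preserves the bilinear form of the lattice U ⊕ ⟨2n⟩. -/

import Mathlib

open Matrix

/-- The map `ψ` from 2×2 real matrices of determinant one to 3×3 real matrices. -/
noncomputable def psiMap (n : ℝ) (A : Matrix (Fin 2) (Fin 2) ℝ) : Matrix (Fin 3) (Fin 3) ℝ :=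
  let a := A 0 0; let b := A 0 1; let c := A 1 0; let d := A 1 1
  !![d ^ 2, -c ^ 2 / n, 2 * c * d;
     -n * b ^ 2, a ^ 2, -2 * n * a * b;
     b * d, -a * c / n, a * d + b * c]

/-- The Gram matrix of the lattice `U ⊕ ⟨2n⟩`. -/
def SigmaMat (n : ℝ) : Matrix (Fin 3) (Fin 3) ℝ :=
  !![0, 1, 0; 1, 0, 0; 0, 0, 2 * n]

/-- `ψ(A)` preserves the bilinear form of `U ⊕ ⟨2n⟩`:
`ᵗψ(A) · Σ · ψ(A) = Σ` for every `A ∈ SL(2,ℝ)`. -/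
theorem psi_preserves_form (n : ℕ) (hn : 1 ≤ n) (A : Matrix (Fin 2) (Fin 2) ℝ)
    (hA : A.det = 1) :
    (psiMap (n : ℝ) A)ᵀ * SigmaMat (n : ℝ) * psiMap (n : ℝ) A = SigmaMat (n : ℝ) := by
  have hn0 : (n : ℝ) ≠ 0 := by positivity
  obtain ⟨a, b, c, d, rfl⟩ : ∃ a b c d, A = !![a, b; c, d] :=
    ⟨A 0 0, A 0 1, A 1 0, A 1 1, (Matrix.eta_fin_two A)⟩
  rw [Matrix.det_fin_two_of] at hA
  ext i j
  fin_cases i <;> fin_cases j <;>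
    simp [psiMap, SigmaMat, Matrix.mul_apply, Fin.sum_univ_succ, Matrix.vecHead,
      Matrix.vecTail] <;>
    (try field_simp) <;>
    first
      | ring1
      | linear_combination ((n : ℝ) * (a * d - b * c + 1)) * hA
      | linear_combination (2 * (n : ℝ) * (a * d - b * c + 1)) * hA
      | linear_combination (a * d - b * c + 1) * hA
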